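/- arXiv:2206.08595 — 6 statements merged into one kernel-verified Lean document; each statement's English description precedes it below -/
import Mathlib

section
/- Let R be a commutative ring, I an ideal of R, and g : ℕ → R a function such that (Δ^i g)(n) ∈ I^i for all integers i, n ≥ 0. Then for every integer B ≥ 1 and every s ∈ ℕ, one has g(s) − ∑_{i=0}^{B−1} (−1)^i (Δ^i g)(s+1) ∈ I^B. (Equivalently, the truncation of the formal inverse (1+Δ)^{−1} = ∑_{i≥0} (−1)^i Δ^i after B terms computes g(s) from the values g(s+1), …, g(s+B) up to an error in I^B.) -/
theorem rubin_key (R : Type*) [CommRing R] (g : ℕ → R) :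
    ∀ B s : ℕ, g s - ∑ i ∈ Finset.range B, (-1 : R) ^ i * ((fwdDiff 1)^[i] g (s + 1))
      = (-1) ^ B * (fwdDiff 1)^[B] g s := by
  intro B
  induction B with
  | zero => simp
  | succ B ih =>
    intro s
    rw [Finset.sum_range_succ, sub_add_eq_sub_sub, ih s,
      Function.iterate_succ_apply' (fwdDiff 1) B g]
    simp only [fwdDiff]
    ring

/-- **Rubin's truncated Neumann series.**
Let `R` be a commutative ring, `I` an ideal of `R`, and `g : ℕ → R` a function such that
`(Δ^i g)(n) ∈ I^i` for all `i, n ≥ 0`.  Then for every `B ≥ 1` and every `s : ℕ`,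
`g s − ∑_{i=0}^{B−1} (−1)^i (Δ^i g)(s+1) ∈ I^B`. -/
theorem rubin_truncated_inverse
    (R : Type*) [CommRing R] (I : Ideal R) (g : ℕ → R)
    (hg : ∀ i n : ℕ, (fwdDiff 1)^[i] g n ∈ I ^ i) :
    ∀ B : ℕ, 1 ≤ B → ∀ s : ℕ,
      g s - ∑ i ∈ Finset.range B, (-1 : R) ^ i * ((fwdDiff 1)^[i] g (s + 1)) ∈ I ^ B := by
  intro B _ s
  rw [rubin_key R g B s]
  exact Ideal.mul_mem_left _ _ (hg B s)
end

section
/- Let R be a commutative ring, I an ideal of R, and g : ℕ → R a function such that (Δ^i g)(n) ∈ I^i for all integers i, n ≥ 0. Then for every integer B ≥ 1, g(0) − ∑_{j=1}^{B} (−1)^{j−1} (∑_{i=j}^{B} binom(i−1, j−1)) g(j) ∈ I^B, where binom denotes the binomial coefficient. -/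
/-- **Abstract form of Rubin's theorem (Proposition MainProp).**
Let `R` be a commutative ring, `I` an ideal, and `g : ℕ → R` with `(Δ^i g)(n) ∈ I^i` for all
`i, n ≥ 0`.  Then for every `B ≥ 1`,
`g 0 − ∑_{j=1}^{B} (−1)^{j−1} (∑_{i=j}^{B} C(i−1, j−1)) g(j) ∈ I^B`. -/
theorem rubin_interpolation
    (R : Type*) [CommRing R] (I : Ideal R) (g : ℕ → R)
    (hg : ∀ i n : ℕ, (fwdDiff 1)^[i] g n ∈ I ^ i) :
    ∀ B : ℕ, 1 ≤ B →
      g 0 - ∑ j ∈ Finset.Icc 1 B, (-1 : R) ^ (j - 1)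
          * (∑ i ∈ Finset.Icc j B, ((i - 1).choose (j - 1) : R)) * g j ∈ I ^ B := by
  intro B hB
  have key : g 0 - ∑ j ∈ Finset.Icc 1 B, (-1 : R) ^ (j - 1)
          * (∑ i ∈ Finset.Icc j B, ((i - 1).choose (j - 1) : R)) * g j
        = (-1 : R) ^ B * (fwdDiff 1)^[B] g 0 := by
    have inner : ∀ j ∈ Finset.Icc 1 B,
        (∑ i ∈ Finset.Icc j B, ((i - 1).choose (j - 1) : R)) = (B.choose j : R) := by
      intro j hj
      obtain ⟨hj1, hjB⟩ := Finset.mem_Icc.mp hj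
      have h : ∑ i ∈ Finset.Icc j B, (i - 1).choose (j - 1) = B.choose j := by
        have hmap : Finset.Icc j B
            = (Finset.Icc (j-1) (B-1)).map (addLeftEmbedding 1) := by
          rw [Finset.map_add_left_Icc]
          congr 1 <;> omega
        rw [hmap, Finset.sum_map]
        have hc : ∀ m, (addLeftEmbedding 1 m - 1).choose (j-1) = m.choose (j-1) := by
          intro m; simp [addLeftEmbedding]
        simp only [hc]
        rw [Nat.sum_Icc_choose]
        congr 1 <;> omega
      rw [← h]; push_cast; rfl
    rw [Finset.sum_congr rfl (fun j hj => by rw [inner j hj])]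
    have hmap1 : Finset.Icc 1 B = (Finset.range B).map (addLeftEmbedding 1) := by
      rw [Nat.range_eq_Icc_zero_sub_one B (by omega), Finset.map_add_left_Icc]
      congr 1; omega
    rw [hmap1, Finset.sum_map]
    rw [fwdDiff_iter_eq_sum_shift, Finset.mul_sum]
    rw [Finset.sum_range_succ']
    simp only [addLeftEmbedding_apply, zero_add, smul_eq_mul, zsmul_eq_mul, Nat.choose_zero_right,
      Nat.cast_one, mul_one, Nat.sub_zero, smul_one_mul, Int.cast_mul, Int.cast_pow, Int.cast_neg,
      Int.cast_one, Int.cast_natCast, Nat.add_sub_cancel]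
    have step : ∀ i ∈ Finset.range B,
        (-1 : R) ^ (1 + i - 1) * (B.choose (1 + i) : R) * g (1 + i)
        = -((-1:R)^B * ((-1:R)^(B - (i+1)) * (B.choose (i+1) : R) * g (i+1))) := by
      intro i hi
      have hiB : i + 1 ≤ B := Finset.mem_range.mp hi
      have h1i : (1 + i) = i + 1 := by omega
      have h1 : 1 + i - 1 = i := by omega
      have hsplit : (-1:R)^B = (-1:R)^(B - (i+1)) * (-1:R)^(i+1) := by
        rw [← pow_add]; congr 1; omega
      rw [h1i, Nat.add_sub_cancel, hsplit]
      rw [show -(((-1:R)^(B-(i+1)) * (-1:R)^(i+1)) * ((-1:R)^(B-(i+1)) * (B.choose (i+1):R) * g (i+1)))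
          = ((-1:R)^(B-(i+1)) * (-1:R)^(B-(i+1))) * (-((-1:R)^(i+1)) * (B.choose (i+1):R) * g (i+1))
          from by ring]
      rw [← pow_add, show B-(i+1) + (B-(i+1)) = 2 * (B-(i+1)) from by ring, pow_mul]
      have : -((-1:R)^(i+1)) = (-1:R)^i := by rw [pow_succ]; ring
      rw [this]
      simp
    rw [Finset.sum_congr rfl step, Finset.sum_neg_distrib]
    have hB0 : (-1:R)^B * ((-1:R)^B * g 0) = g 0 := by
      rw [← mul_assoc, ← pow_add, show B + B = 2*B from by ring, pow_mul]
      simp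
    rw [hB0]; ring
  rw [key]
  exact Ideal.mul_mem_left _ _ (hg B 0)
end

section
/- Fix a prime p, an element u ∈ ℤ_p with u − 1 ∈ pℤ_p, and a formal power series H ∈ ℤ_p[[X]]. The substituted power series H̃(X) := H(u·X + (u−1)) − H(X) is a well-defined element of ℤ_p[[X]] (the substitution is legitimate because the constant term u−1 of u·X + (u−1) is topologically nilpotent in ℤ_p), all of whose coefficients b_k lie in pℤ_p; moreover, writing g(n) := ∑_{k≥0} a_k (u^n − 1)^k for the Iwasawa function attached to H = ∑_{k≥0} a_k X^k, one has (Δg)(n) = ∑_{k≥0} b_k (u^n − 1)^k for every n ∈ ℕ. -/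
open Finset Filter

section Aux

variable {p : ℕ} [Fact p.Prime]

private lemma RubinAux.mem_span_p_iff (x : ℤ_[p]) :
    x ∈ Ideal.span {(p : ℤ_[p])} ↔ ‖x‖ ≤ (p : ℝ)⁻¹ := by
  have h := PadicInt.norm_le_pow_iff_mem_span_pow x 1
  rw [pow_one] at h
  rw [← h]
  norm_num

end Aux

/-- **Rubin's lemma: the difference operator maps Iwasawa functions into `p·𝓘`**
(one-variable, `ℤ_p`-coefficient form).
Fix a prime `p`, `u ∈ ℤ_p` with `u − 1 ∈ pℤ_p`, and `H = ∑_k a_k X^k ∈ ℤ_p[[X]]`.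
The substituted series `H̃(X) = H(u·X + (u−1)) − H(X)` is a well-defined power series:
its `k`-th coefficient is `b_k = (∑_{m} a_m · C(m,k) · u^k · (u−1)^{m−k}) − a_k`, where each
of these coefficient families is summable in `ℤ_p` (legitimacy of the substitution, since
`u − 1` is topologically nilpotent).  All the `b_k` lie in `pℤ_p`, and writing
`g(n) = ∑_k a_k (u^n − 1)^k` one has `(Δg)(n) = ∑_k b_k (u^n − 1)^k` for every `n`. -/
theorem fwdDiff_iwasawaFn_substituted_series
    (p : ℕ) [Fact p.Prime] (u : ℤ_[p]) (hu : u - 1 ∈ Ideal.span {(p : ℤ_[p])})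
    (H : PowerSeries ℤ_[p])
    (a : ℕ → ℤ_[p]) (ha : ∀ k, a k = PowerSeries.coeff k H)
    (g : ℕ → ℤ_[p]) (hgdef : ∀ n : ℕ, g n = ∑' k : ℕ, a k * (u ^ n - 1) ^ k)
    (b : ℕ → ℤ_[p])
    (hbdef : ∀ k : ℕ,
      b k = (∑' m : ℕ, a m * (m.choose k : ℤ_[p]) * u ^ k * (u - 1) ^ (m - k)) - a k) :
    (∀ k : ℕ,
        Summable (fun m : ℕ => a m * (m.choose k : ℤ_[p]) * u ^ k * (u - 1) ^ (m - k)))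
      ∧ (∀ k : ℕ, b k ∈ Ideal.span {(p : ℤ_[p])})
      ∧ (∀ n : ℕ, fwdDiff 1 g n = ∑' k : ℕ, b k * (u ^ n - 1) ^ k) := by
  classical
  have hp1 : (1 : ℝ) < p := by exact_mod_cast (Fact.out : p.Prime).one_lt
  set r : ℝ := (p : ℝ)⁻¹ with hrdef
  have hr0 : 0 ≤ r := by positivity
  have hr1 : r < 1 := by
    rw [hrdef, inv_lt_one_iff₀]; right; exact hp1
  have hs : ‖u - 1‖ ≤ r := (RubinAux.mem_span_p_iff _).1 hu
  have hun : ∀ n : ℕ, ‖u ^ n - 1‖ ≤ r := by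
    intro n
    refine (RubinAux.mem_span_p_iff _).1 ?_
    rw [Ideal.mem_span_singleton] at hu ⊢
    exact hu.trans (by simpa using sub_dvd_pow_sub_pow u 1 n)
  -- bound on the coefficient terms
  set c : ℕ → ℕ → ℤ_[p] :=
    fun k m => a m * (m.choose k : ℤ_[p]) * u ^ k * (u - 1) ^ (m - k) with hcdef
  have hcbound : ∀ k m : ℕ, ‖c k m‖ ≤ r ^ (m - k) := by
    intro k m
    calc ‖c k m‖ = ‖a m * (m.choose k : ℤ_[p]) * u ^ k‖ * ‖(u - 1) ^ (m - k)‖ :=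
          norm_mul _ _
      _ ≤ 1 * r ^ (m - k) := by
          refine mul_le_mul (PadicInt.norm_le_one _) ?_ (norm_nonneg _) zero_le_one
          rw [norm_pow]
          exact pow_le_pow_left₀ (norm_nonneg _) hs _
      _ = r ^ (m - k) := one_mul _
  -- (1) summability
  have hsum1 : ∀ k, Summable (c k) := by
    intro k
    rw [← summable_nat_add_iff k]
    refine Summable.of_norm_bounded (summable_geometric_of_lt_one hr0 hr1) fun j => ?_
    simpa [Nat.add_sub_cancel] using hcbound k (j + k)
  -- (2) b k ∈ pℤ_p
  have hb : ∀ k, b k ∈ Ideal.span {(p : ℤ_[p])} := by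
    intro k
    rw [RubinAux.mem_span_p_iff]
    have hind : Summable (fun m : ℕ => if m = k then a k else 0) :=
      (hasSum_ite_eq k (a k)).summable
    have hd : b k = ∑' m : ℕ, (c k m - if m = k then a k else 0) := by
      rw [Summable.tsum_sub (hsum1 k) hind, tsum_ite_eq, hbdef]
    rw [hd]
    refine IsUltrametricDist.norm_tsum_le_of_forall_le_of_nonneg hr0 fun m => ?_
    rcases lt_trichotomy m k with h | h | h
    · have : c k m = 0 := by simp [hcdef, Nat.choose_eq_zero_of_lt h]
      simp [this, if_neg h.ne, hr0]
    · subst h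
      have : c m m - a m = a m * (u ^ m - 1) := by
        simp [hcdef]; ring
      rw [if_pos rfl, this, norm_mul]
      calc ‖a m‖ * ‖u ^ m - 1‖ ≤ 1 * r :=
            mul_le_mul (PadicInt.norm_le_one _) (hun m) (norm_nonneg _) zero_le_one
        _ = r := one_mul _
    · rw [if_neg h.ne', sub_zero]
      refine (hcbound k m).trans ?_
      calc r ^ (m - k) ≤ r ^ 1 :=
            pow_le_pow_of_le_one hr0 hr1.le (by omega)
        _ = r := pow_one r
  refine ⟨hsum1, hb, fun n => ?_⟩
  -- (3) the difference identity
  set t : ℤ_[p] := u ^ n - 1 with htdef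
  have htn : ‖t‖ ≤ r := hun n
  set F : ℕ × ℕ → ℤ_[p] := fun q => c q.2 q.1 * t ^ q.2 with hFdef
  set s : ℝ := Real.sqrt r with hsdef
  have hs0 : 0 ≤ s := Real.sqrt_nonneg _
  have hs1 : s < 1 := by
    rw [hsdef]
    calc Real.sqrt r < Real.sqrt 1 := Real.sqrt_lt_sqrt hr0 hr1
      _ = 1 := Real.sqrt_one
  have hss : s * s = r := Real.mul_self_sqrt hr0
  have hFsum : Summable F := by
    refine Summable.of_norm_bounded (g := fun q : ℕ × ℕ => s ^ q.1 * s ^ q.2)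
      ((summable_geometric_of_lt_one hs0 hs1).mul_of_nonneg
        (summable_geometric_of_lt_one hs0 hs1)
        (fun _ => pow_nonneg hs0 _) (fun _ => pow_nonneg hs0 _)) ?_
    rintro ⟨m, k⟩
    by_cases hkm : k ≤ m
    · have h1 : ‖F (m, k)‖ ≤ r ^ m := by
        calc ‖F (m, k)‖ = ‖c k m‖ * ‖t ^ k‖ := norm_mul _ _
          _ ≤ r ^ (m - k) * r ^ k := by
              refine mul_le_mul (hcbound k m) ?_ (norm_nonneg _) (pow_nonneg hr0 _)
              rw [norm_pow]
              exact pow_le_pow_left₀ (norm_nonneg _) htn _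
          _ = r ^ m := by rw [← pow_add]; congr 1; omega
      refine h1.trans ?_
      have hrm : r ^ m = s ^ m * s ^ m := by
        rw [← mul_pow, hss]
      rw [hrm]
      exact mul_le_mul_of_nonneg_left
        (pow_le_pow_of_le_one hs0 hs1.le hkm) (pow_nonneg hs0 _)
    · have : F (m, k) = 0 := by
        simp [hFdef, hcdef, Nat.choose_eq_zero_of_lt (not_le.mp hkm)]
      rw [this, norm_zero]
      positivity
  -- row sums give g (n+1)
  have hrow : ∀ m : ℕ, (∑' k : ℕ, F (m, k)) = a m * (u ^ (n + 1) - 1) ^ m := by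
    intro m
    rw [tsum_eq_sum (s := Finset.range (m + 1))
        (f := fun k => F (m, k)) (fun k hk => by
          have hk' : m < k := by
            simpa using Finset.mem_range.not.mp hk
          simp [hFdef, hcdef, Nat.choose_eq_zero_of_lt hk'])]
    have hu1 : u ^ (n + 1) - 1 = u * t + (u - 1) := by
      rw [pow_succ, htdef]; ring
    rw [hu1, add_pow, Finset.mul_sum]
    refine Finset.sum_congr rfl fun k hk => ?_
    simp only [hFdef, hcdef, mul_pow]
    ring
  -- assemble
  have hcolsum : ∀ k : ℕ, (∑' m : ℕ, F (m, k)) = (∑' m : ℕ, c k m) * t ^ k := by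
    intro k
    simpa [hFdef] using (hsum1 k).tsum_mul_right (t ^ k)
  have hA : Summable (fun k : ℕ => (∑' m : ℕ, c k m) * t ^ k) := by
    refine Summable.of_norm_bounded (summable_geometric_of_lt_one hr0 hr1) fun k => ?_
    rw [norm_mul, norm_pow]
    calc ‖∑' m : ℕ, c k m‖ * ‖t‖ ^ k ≤ 1 * r ^ k := by
          refine mul_le_mul ?_ (pow_le_pow_left₀ (norm_nonneg _) htn _) (by positivity)
            zero_le_one
          exact IsUltrametricDist.norm_tsum_le_of_forall_le_of_nonneg zero_le_one
            fun m => PadicInt.norm_le_one _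
      _ = r ^ k := one_mul _
  have hB : Summable (fun k : ℕ => a k * t ^ k) := by
    refine Summable.of_norm_bounded (summable_geometric_of_lt_one hr0 hr1) fun k => ?_
    rw [norm_mul, norm_pow]
    calc ‖a k‖ * ‖t‖ ^ k ≤ 1 * r ^ k :=
          mul_le_mul (PadicInt.norm_le_one _) (pow_le_pow_left₀ (norm_nonneg _) htn _)
            (by positivity) zero_le_one
      _ = r ^ k := one_mul _
  have key : (∑' m : ℕ, a m * (u ^ (n + 1) - 1) ^ m)
      = ∑' k : ℕ, (∑' m : ℕ, c k m) * t ^ k := by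
    calc (∑' m : ℕ, a m * (u ^ (n + 1) - 1) ^ m)
        = ∑' m : ℕ, ∑' k : ℕ, F (m, k) := by
          exact tsum_congr fun m => (hrow m).symm
      _ = ∑' k : ℕ, ∑' m : ℕ, F (m, k) :=
          (Summable.tsum_comm (f := fun m k => F (m, k)) (by exact hFsum)).symm
      _ = ∑' k : ℕ, (∑' m : ℕ, c k m) * t ^ k := tsum_congr hcolsum
  have hsplit : (∑' k : ℕ, b k * t ^ k)
      = (∑' k : ℕ, (∑' m : ℕ, c k m) * t ^ k) - ∑' k : ℕ, a k * t ^ k := by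
    rw [← Summable.tsum_sub hA hB]
    refine tsum_congr fun k => ?_
    rw [hbdef]; ring
  show g (n + 1) - g n = _
  rw [hgdef, hgdef, hsplit, ← key, ← htdef]
end

section
/- Fix a prime p, an element u ∈ ℤ_p with u − 1 ∈ pℤ_p, and a formal power series H = ∑_{k≥0} a_k X^k with a_k ∈ ℤ_p, and let g : ℕ → ℤ_p be the associated Iwasawa function g(n) = ∑_{k≥0} a_k (u^n − 1)^k. Then for all integers i, n ≥ 0, the i-th iterated forward difference satisfies (Δ^i g)(n) ∈ p^i ℤ_p. -/
open Polynomial Filter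

variable {p : ℕ} [Fact p.Prime]

/-- Auxiliary: `C p` divides `(C u * X + C (u-1))^n - X^n`. -/
private lemma aux_pow_dvd (u : ℤ_[p]) (hpu : (p : ℤ_[p]) ∣ u - 1) (n : ℕ) :
    (C (p : ℤ_[p])) ∣ (C u * X + C (u - 1)) ^ n - X ^ n := by
  have hC1 : (C (u - 1) : ℤ_[p][X]) = C u - 1 := by rw [map_sub, map_one]
  have hC : (C (p : ℤ_[p])) ∣ (C u - 1 : ℤ_[p][X]) := hC1 ▸ map_dvd C hpu
  rw [hC1]
  induction n with
  | zero => simp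
  | succ n ih =>
    have h1 : (C u * X + (C u - 1)) ^ (n+1) - X ^ (n+1)
        = (C u * X + (C u - 1)) * ((C u * X + (C u - 1)) ^ n - X ^ n)
          + ((C u - 1) * X + (C u - 1)) * X ^ n := by ring
    rw [h1]
    exact dvd_add (Dvd.dvd.mul_left ih _)
      ((dvd_add (hC.mul_right X) hC).mul_right _)

private lemma aux_comp_dvd (u : ℤ_[p]) (hpu : (p : ℤ_[p]) ∣ u - 1) (P : ℤ_[p][X]) :
    (C (p : ℤ_[p])) ∣ P.comp (C u * X + C (u - 1)) - P := by
  induction P using Polynomial.induction_on' with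
  | add f g hf hg =>
    have : (f + g).comp (C u * X + C (u - 1)) - (f + g)
        = (f.comp (C u * X + C (u - 1)) - f) + (g.comp (C u * X + C (u - 1)) - g) := by
      simp [add_comp]; ring
    rw [this]; exact dvd_add hf hg
  | monomial n a =>
    rw [← C_mul_X_pow_eq_monomial, mul_comp, C_comp, X_pow_comp]
    have : C a * (C u * X + C (u - 1)) ^ n - C a * X ^ n
        = C a * ((C u * X + C (u - 1)) ^ n - X ^ n) := by ring
    rw [this]
    exact (aux_pow_dvd u hpu n).mul_left _

/-- One forward-difference step of a "polynomial Iwasawa function". -/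
private lemma aux_step (u : ℤ_[p]) (hpu : (p : ℤ_[p]) ∣ u - 1) (P : ℤ_[p][X]) :
    ∃ Q : ℤ_[p][X], ∀ n : ℕ,
      fwdDiff 1 (fun m : ℕ => P.eval (u ^ m - 1)) n = p * Q.eval (u ^ n - 1) := by
  obtain ⟨Q, hQ⟩ := aux_comp_dvd u hpu P
  refine ⟨Q, fun n => ?_⟩
  have h1 : u ^ (n + 1) - 1 = u * (u ^ n - 1) + (u - 1) := by ring
  have h2 := congrArg (fun R : ℤ_[p][X] => R.eval (u ^ n - 1)) hQ
  simp only [eval_sub, eval_comp, eval_add, eval_mul, eval_C, eval_X, eval_pow] at h2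
  simp only [fwdDiff, h1]
  simpa using h2

private lemma aux_iter (u : ℤ_[p]) (hpu : (p : ℤ_[p]) ∣ u - 1) (i : ℕ) (P : ℤ_[p][X]) :
    ∃ Q : ℤ_[p][X], ∀ n : ℕ,
      (fwdDiff 1)^[i] (fun m : ℕ => P.eval (u ^ m - 1)) n = p ^ i * Q.eval (u ^ n - 1) := by
  induction i generalizing P with
  | zero => exact ⟨P, fun n => by simp⟩
  | succ i ih =>
    obtain ⟨Q₀, hQ₀⟩ := aux_step u hpu P
    obtain ⟨Q₁, hQ₁⟩ := ih Q₀
    refine ⟨Q₁, fun n => ?_⟩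
    have hf : fwdDiff 1 (fun m : ℕ => P.eval (u ^ m - 1))
        = (p : ℤ_[p]) • fun m : ℕ => Q₀.eval (u ^ m - 1) := by
      funext m; simpa [smul_eq_mul] using hQ₀ m
    rw [Function.iterate_succ_apply, hf, fwdDiff_iter_const_smul]
    simp only [Pi.smul_apply, smul_eq_mul, hQ₁ n, pow_succ]
    ring

/-- Ultrametric bound for a tsum. -/
private lemma aux_norm_tsum_le {c : ℝ} (hc : 0 ≤ c) (t : ℕ → ℤ_[p]) (h : ∀ k, ‖t k‖ ≤ c) :
    ‖∑' k, t k‖ ≤ c := by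
  by_cases ht : Summable t
  · exact le_of_tendsto ht.hasSum.norm
      (Filter.Eventually.of_forall fun s =>
        IsUltrametricDist.norm_sum_le_of_forall_le_of_nonneg hc fun i _ => h i)
  · rw [tsum_eq_zero_of_not_summable ht, norm_zero]; exact hc

/-- **Iterated differences of a one-variable Iwasawa function.**
Fix a prime `p`, `u ∈ ℤ_p` with `u − 1 ∈ pℤ_p`, and `H = ∑_k a_k X^k ∈ ℤ_p[[X]]`, and let
`g : ℕ → ℤ_p` be the associated Iwasawa function `g(n) = ∑_k a_k (u^n − 1)^k`.  Then for all
`i, n ≥ 0` the `i`-th iterated forward difference satisfies `(Δ^i g)(n) ∈ p^i ℤ_p`. -/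
theorem fwdDiff_iterate_iwasawaFn_mem_pow
    (p : ℕ) [Fact p.Prime] (u : ℤ_[p]) (hu : u - 1 ∈ Ideal.span {(p : ℤ_[p])})
    (H : PowerSeries ℤ_[p])
    (a : ℕ → ℤ_[p]) (ha : ∀ k, a k = PowerSeries.coeff k H)
    (g : ℕ → ℤ_[p]) (hgdef : ∀ n : ℕ, g n = ∑' k : ℕ, a k * (u ^ n - 1) ^ k) :
    ∀ i n : ℕ, (fwdDiff 1)^[i] g n ∈ Ideal.span {(p : ℤ_[p])} ^ i := by
  have hpu : (p : ℤ_[p]) ∣ u - 1 := Ideal.mem_span_singleton.mp hu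
  intro i n
  -- norm bound on u^m - 1
  have hnorm : ∀ m : ℕ, ‖u ^ m - 1‖ ≤ ((p : ℝ))⁻¹ := by
    intro m
    have hdvd : (p : ℤ_[p]) ∣ u ^ m - 1 := by
      refine hpu.trans ?_
      simpa using sub_dvd_pow_sub_pow u 1 m
    have := (PadicInt.norm_le_pow_iff_mem_span_pow (u ^ m - 1) 1).mpr
      (by rwa [Ideal.mem_span_singleton, pow_one])
    simpa [zpow_neg, zpow_one] using this
  have hplt : ((p : ℝ))⁻¹ < 1 := by
    rw [inv_lt_one_iff₀]
    right
    exact_mod_cast (Fact.out : p.Prime).one_lt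
  have hpnn : (0:ℝ) ≤ ((p : ℝ))⁻¹ := by positivity
  -- summability
  have hsum : ∀ m : ℕ, Summable (fun k => a k * (u ^ m - 1) ^ k) := by
    intro m
    refine Summable.of_norm_bounded (g := fun k => ((p : ℝ))⁻¹ ^ k)
      (summable_geometric_of_lt_one hpnn hplt) (fun k => ?_)
    rw [norm_mul, norm_pow]
    calc ‖a k‖ * ‖u ^ m - 1‖ ^ k ≤ 1 * ((p : ℝ))⁻¹ ^ k := by
          exact mul_le_mul (PadicInt.norm_le_one _) (pow_le_pow_left₀ (norm_nonneg _) (hnorm m) k)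
            (by positivity) zero_le_one
      _ = ((p : ℝ))⁻¹ ^ k := one_mul _
  -- rewrite the iterated difference as a tsum
  have key : (fwdDiff 1)^[i] g n
      = ∑' k : ℕ, a k * ((fwdDiff 1)^[i] (fun m : ℕ => (u ^ m - 1) ^ k) n) := by
    rw [fwdDiff_iter_eq_sum_shift]
    have hg' : ∀ j : ℕ, g (n + j • 1) = ∑' k : ℕ, a k * (u ^ (n + j) - 1) ^ k := by
      intro j; rw [smul_eq_mul, mul_one, hgdef]
    calc ∑ j ∈ Finset.range (i + 1), ((-1 : ℤ) ^ (i - j) * (i.choose j : ℤ)) • g (n + j • 1)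
        = ∑ j ∈ Finset.range (i + 1),
            ∑' k : ℕ, (((-1 : ℤ) ^ (i - j) * (i.choose j : ℤ) : ℤ) : ℤ_[p])
              * (a k * (u ^ (n + j) - 1) ^ k) := by
          refine Finset.sum_congr rfl fun j _ => ?_
          rw [hg' j, zsmul_eq_mul, ((hsum (n + j)).tsum_mul_left _)]
      _ = ∑' k : ℕ, ∑ j ∈ Finset.range (i + 1),
            (((-1 : ℤ) ^ (i - j) * (i.choose j : ℤ) : ℤ) : ℤ_[p])
              * (a k * (u ^ (n + j) - 1) ^ k) := by
          rw [Summable.tsum_finsetSum]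
          intro j _
          exact (hsum (n + j)).mul_left _
      _ = ∑' k : ℕ, a k * ((fwdDiff 1)^[i] (fun m : ℕ => (u ^ m - 1) ^ k) n) := by
          congr 1; funext k
          rw [fwdDiff_iter_eq_sum_shift, Finset.mul_sum]
          refine Finset.sum_congr rfl fun j _ => ?_
          simp only [smul_eq_mul, mul_one, zsmul_eq_mul]
          ring
  -- conclude with the norm bound
  rw [key, Ideal.span_singleton_pow, ← PadicInt.norm_le_pow_iff_mem_span_pow]
  refine aux_norm_tsum_le (by positivity) _ fun k => ?_
  obtain ⟨Q, hQ⟩ := aux_iter u hpu i (X ^ k : ℤ_[p][X])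
  have hk : (fwdDiff 1)^[i] (fun m : ℕ => (u ^ m - 1) ^ k) n = p ^ i * Q.eval (u ^ n - 1) := by
    simpa using hQ n
  rw [hk]
  calc ‖a k * ((p:ℤ_[p]) ^ i * Q.eval (u ^ n - 1))‖
      ≤ ‖(p:ℤ_[p]) ^ i * Q.eval (u ^ n - 1)‖ := by
        rw [norm_mul]
        exact mul_le_of_le_one_left (norm_nonneg _) (PadicInt.norm_le_one _)
    _ ≤ ‖(p:ℤ_[p]) ^ i‖ := by
        rw [norm_mul]
        exact mul_le_of_le_one_right (norm_nonneg _) (PadicInt.norm_le_one _)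
    _ ≤ (p : ℝ) ^ (-(i:ℤ)) := by
        rw [norm_pow, PadicInt.norm_p]
        rw [zpow_neg, zpow_natCast, inv_pow]
end

section
/- Fix a prime p, an element u ∈ ℤ_p with u − 1 ∈ pℤ_p, and a formal power series H = ∑_{k≥0} a_k X^k with a_k ∈ ℤ_p, and let g : ℕ → ℤ_p be the associated Iwasawa function g(n) = ∑_{k≥0} a_k (u^n − 1)^k. Then for every integer B ≥ 1, g(0) − ∑_{j=1}^{B} (−1)^{j−1} (∑_{i=j}^{B} binom(i−1, j−1)) g(j) ∈ p^B ℤ_p, where binom denotes the binomial coefficient. -/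
/-- Hockey-stick identity in the form we need: `∑_{i=j}^{B} C(i−1, j−1) = C(B, j)` for `j ≥ 1`. -/
private lemma sum_choose_telescope (j : ℕ) (hj : 1 ≤ j) :
    ∀ B : ℕ, ∑ i ∈ Finset.Icc j B, (i - 1).choose (j - 1) = B.choose j := by
  intro B
  induction B with
  | zero =>
      rw [Finset.Icc_eq_empty (by omega), Finset.sum_empty,
        Nat.choose_eq_zero_of_lt hj]
  | succ B ih =>
      by_cases h : j ≤ B + 1
      · rw [Finset.sum_Icc_succ_top h, ih]
        have hj1 : j - 1 + 1 = j := by omega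
        calc B.choose j + (B + 1 - 1).choose (j - 1)
            = B.choose (j - 1) + B.choose (j - 1 + 1) := by
              rw [Nat.add_sub_cancel, hj1, Nat.add_comm]
          _ = (B + 1).choose (j - 1 + 1) := (Nat.choose_succ_succ _ _).symm
          _ = (B + 1).choose j := by rw [hj1]
      · rw [Finset.Icc_eq_empty (by omega), Finset.sum_empty,
          Nat.choose_eq_zero_of_lt (by omega)]

/-- **Rubin's interpolation formula for Iwasawa functions (Proposition MainProp).**
Fix a prime `p`, `u ∈ ℤ_p` with `u − 1 ∈ pℤ_p`, and `H = ∑_k a_k X^k ∈ ℤ_p[[X]]`, and let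
`g : ℕ → ℤ_p` be the associated Iwasawa function `g(n) = ∑_k a_k (u^n − 1)^k`.  Then for
every `B ≥ 1`,
`g 0 − ∑_{j=1}^{B} (−1)^{j−1} (∑_{i=j}^{B} C(i−1, j−1)) g(j) ∈ p^B ℤ_p`. -/
theorem iwasawaFn_value_at_zero_congruence
    (p : ℕ) [Fact p.Prime] (u : ℤ_[p]) (hu : u - 1 ∈ Ideal.span {(p : ℤ_[p])})
    (H : PowerSeries ℤ_[p])
    (a : ℕ → ℤ_[p]) (ha : ∀ k, a k = PowerSeries.coeff k H)
    (g : ℕ → ℤ_[p]) (hgdef : ∀ n : ℕ, g n = ∑' k : ℕ, a k * (u ^ n - 1) ^ k) :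
    ∀ B : ℕ, 1 ≤ B →
      g 0 - ∑ j ∈ Finset.Icc 1 B, (-1 : ℤ_[p]) ^ (j - 1)
          * (∑ i ∈ Finset.Icc j B, ((i - 1).choose (j - 1) : ℤ_[p])) * g j
        ∈ Ideal.span {(p : ℤ_[p])} ^ B := by
  intro B hB
  set I : Ideal ℤ_[p] := Ideal.span {(p : ℤ_[p])} with hI
  -- `u^m - 1 ∈ (p)` for every `m`
  have hmem : ∀ m : ℕ, u ^ m - 1 ∈ I := by
    intro m
    induction m with
    | zero => simp
    | succ n ih =>
        have : u ^ (n + 1) - 1 = u * (u ^ n - 1) + (u - 1) := by ring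
        rw [this]
        exact I.add_mem (I.mul_mem_left u ih) hu
  have hplt : (1 : ℝ) < (p : ℝ) := by
    exact_mod_cast (Fact.out : p.Prime).one_lt
  -- norms of `u^m - 1` are `< 1`
  have hnorm : ∀ m : ℕ, ‖u ^ m - 1‖ < 1 := by
    intro m
    have h1 : u ^ m - 1 ∈ Ideal.span {(p : ℤ_[p]) ^ 1} := by
      rw [pow_one]; exact hmem m
    have h2 : ‖u ^ m - 1‖ ≤ (p : ℝ) ^ (-(1 : ℕ) : ℤ) :=
      (PadicInt.norm_le_pow_iff_mem_span_pow _ 1).mpr h1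
    have h3 : ((p : ℝ)) ^ (-(1 : ℕ) : ℤ) < 1 := by
      rw [show (-(1 : ℕ) : ℤ) = -1 by norm_num, zpow_neg_one]
      exact inv_lt_one_of_one_lt₀ hplt
    exact lt_of_le_of_lt h2 h3
  -- summability of the defining series of `g n`
  have hsummable : ∀ n : ℕ, Summable (fun k : ℕ => a k * (u ^ n - 1) ^ k) := by
    intro n
    apply Summable.of_norm_bounded (g := fun k : ℕ => ‖u ^ n - 1‖ ^ k)
      (summable_geometric_of_lt_one (norm_nonneg _) (hnorm n))
    intro k
    calc ‖a k * (u ^ n - 1) ^ k‖ = ‖a k‖ * ‖(u ^ n - 1) ^ k‖ := norm_mul _ _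
      _ ≤ 1 * ‖(u ^ n - 1) ^ k‖ :=
          mul_le_mul_of_nonneg_right (PadicInt.norm_le_one _) (norm_nonneg _)
      _ = ‖u ^ n - 1‖ ^ k := by rw [one_mul, norm_pow]
  -- the alternating-binomial combination of the `(u^j-1)^k`
  set t : ℕ → ℤ_[p] :=
    fun k => ∑ j ∈ Finset.range (B + 1), (-1 : ℤ_[p]) ^ j * (B.choose j : ℤ_[p]) * (u ^ j - 1) ^ k
    with ht
  -- each `t k` lies in `I ^ B`
  have htmem : ∀ k : ℕ, t k ∈ I ^ B := by
    intro k
    have hexp : t k = ∑ m ∈ Finset.range (k + 1),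
        ((-1 : ℤ_[p]) ^ (m + k) * (k.choose m : ℤ_[p])) * (1 - u ^ m) ^ B := by
      rw [ht]
      have hsub : ∀ j : ℕ, (u ^ j - 1 : ℤ_[p]) ^ k
          = ∑ m ∈ Finset.range (k + 1),
              (-1 : ℤ_[p]) ^ (m + k) * (u ^ j) ^ m * 1 ^ (k - m) * (k.choose m) := by
        intro j; exact sub_pow _ _ _
      calc ∑ j ∈ Finset.range (B + 1),
              (-1 : ℤ_[p]) ^ j * (B.choose j : ℤ_[p]) * (u ^ j - 1) ^ k
          = ∑ j ∈ Finset.range (B + 1), ∑ m ∈ Finset.range (k + 1),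
              ((-1 : ℤ_[p]) ^ (m + k) * (k.choose m : ℤ_[p]))
                * ((-1 : ℤ_[p]) ^ j * (B.choose j : ℤ_[p]) * ((u ^ m) ^ j)) := by
            refine Finset.sum_congr rfl fun j _ => ?_
            rw [hsub j, Finset.mul_sum]
            refine Finset.sum_congr rfl fun m _ => ?_
            have hpow : ((u ^ j) ^ m : ℤ_[p]) = (u ^ m) ^ j := by
              rw [← pow_mul, ← pow_mul, Nat.mul_comm]
            rw [hpow]; ring
        _ = ∑ m ∈ Finset.range (k + 1),
              ((-1 : ℤ_[p]) ^ (m + k) * (k.choose m : ℤ_[p]))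
                * ∑ j ∈ Finset.range (B + 1),
                    ((-1 : ℤ_[p]) ^ j * (B.choose j : ℤ_[p]) * ((u ^ m) ^ j)) := by
            rw [Finset.sum_comm]
            exact Finset.sum_congr rfl fun m _ => (Finset.mul_sum _ _ _).symm
        _ = ∑ m ∈ Finset.range (k + 1),
              ((-1 : ℤ_[p]) ^ (m + k) * (k.choose m : ℤ_[p])) * (1 - u ^ m) ^ B := by
            refine Finset.sum_congr rfl fun m _ => ?_
            congr 1
            have := add_pow (-(u ^ m) : ℤ_[p]) 1 B
            rw [show (-(u ^ m) + 1 : ℤ_[p]) = 1 - u ^ m by ring] at this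
            rw [this]
            refine Finset.sum_congr rfl fun j _ => ?_
            rw [neg_pow]
            ring
    rw [hexp]
    refine Submodule.sum_mem _ fun m _ => Ideal.mul_mem_left _ _ ?_
    have : (1 - u ^ m : ℤ_[p]) ∈ I := by
      have := I.neg_mem (hmem m)
      simpa [neg_sub] using this
    exact Ideal.pow_mem_pow this B
  -- rewrite the target expression as the `B`-th alternating binomial sum of `g`
  have hcoef : ∀ j ∈ Finset.Icc 1 B,
      (∑ i ∈ Finset.Icc j B, ((i - 1).choose (j - 1) : ℤ_[p])) = (B.choose j : ℤ_[p]) := by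
    intro j hj
    rw [Finset.mem_Icc] at hj
    rw [← Nat.cast_sum]
    exact_mod_cast congrArg (Nat.cast : ℕ → ℤ_[p]) (sum_choose_telescope j hj.1 B)
  have hrw : g 0 - ∑ j ∈ Finset.Icc 1 B, (-1 : ℤ_[p]) ^ (j - 1)
          * (∑ i ∈ Finset.Icc j B, ((i - 1).choose (j - 1) : ℤ_[p])) * g j
      = ∑ j ∈ Finset.range (B + 1), (-1 : ℤ_[p]) ^ j * (B.choose j : ℤ_[p]) * g j := by
    rw [Finset.range_eq_Ico, Finset.sum_eq_sum_Ico_succ_bot (by omega : 0 < B + 1)]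
    rw [Finset.Ico_add_one_right_eq_Icc]
    have h0 : (-1 : ℤ_[p]) ^ 0 * (B.choose 0 : ℤ_[p]) * g 0 = g 0 := by simp
    rw [h0]
    have hterm : ∀ j ∈ Finset.Icc 1 B,
        (-1 : ℤ_[p]) ^ j * (B.choose j : ℤ_[p]) * g j
          = -((-1 : ℤ_[p]) ^ (j - 1)
              * (∑ i ∈ Finset.Icc j B, ((i - 1).choose (j - 1) : ℤ_[p])) * g j) := by
      intro j hj
      rw [hcoef j hj]
      rw [Finset.mem_Icc] at hj
      have hj1 : j = (j - 1) + 1 := by omega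
      have hpow : (-1 : ℤ_[p]) ^ j = -(-1 : ℤ_[p]) ^ (j - 1) := by
        conv_lhs => rw [hj1]
        rw [pow_succ]; ring
      rw [hpow]; ring
    rw [Finset.sum_congr rfl hterm, Finset.sum_neg_distrib]
    ring
  rw [hrw]
  -- exchange the finite sum with the tsum
  have hswap : ∑ j ∈ Finset.range (B + 1), (-1 : ℤ_[p]) ^ j * (B.choose j : ℤ_[p]) * g j
      = ∑' k : ℕ, ∑ j ∈ Finset.range (B + 1),
          (-1 : ℤ_[p]) ^ j * (B.choose j : ℤ_[p]) * (a k * (u ^ j - 1) ^ k) := by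
    rw [Summable.tsum_finsetSum fun j _ => (hsummable j).mul_left _]
    refine Finset.sum_congr rfl fun j _ => ?_
    rw [hgdef j, ← Summable.tsum_mul_left _ (hsummable j)]
  have hsumF : Summable (fun k : ℕ => ∑ j ∈ Finset.range (B + 1),
      (-1 : ℤ_[p]) ^ j * (B.choose j : ℤ_[p]) * (a k * (u ^ j - 1) ^ k)) :=
    summable_sum fun j _ => (hsummable j).mul_left _
  rw [hswap]
  -- each term of the tsum lies in `I ^ B`, and `I ^ B` is the closed ball of radius `p^{-B}`
  have hterm_mem : ∀ k : ℕ, (∑ j ∈ Finset.range (B + 1),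
      (-1 : ℤ_[p]) ^ j * (B.choose j : ℤ_[p]) * (a k * (u ^ j - 1) ^ k)) ∈ I ^ B := by
    intro k
    have : (∑ j ∈ Finset.range (B + 1),
        (-1 : ℤ_[p]) ^ j * (B.choose j : ℤ_[p]) * (a k * (u ^ j - 1) ^ k)) = a k * t k := by
      rw [ht, Finset.mul_sum]
      refine Finset.sum_congr rfl fun j _ => ?_
      ring
    rw [this]
    exact Ideal.mul_mem_left _ _ (htmem k)
  have hIB : I ^ B = Ideal.span {(p : ℤ_[p]) ^ B} := Ideal.span_singleton_pow _ _
  rw [hIB, ← PadicInt.norm_le_pow_iff_mem_span_pow]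
  have htend := hsumF.hasSum.tendsto_sum_nat
  have hnorm_tend := htend.norm
  refine le_of_tendsto' hnorm_tend fun n => ?_
  rw [PadicInt.norm_le_pow_iff_mem_span_pow, ← hIB]
  exact Submodule.sum_mem _ fun k _ => hterm_mem k
end

section
/- Let p be a prime, m ≥ 1 an integer, and u_1, …, u_m ∈ ℤ_p with u_j − 1 ∈ pℤ_p for each j. Let H = ∑_d a_d X^d be a formal power series in m variables with coefficients a_d ∈ ℤ_p, where d ranges over finitely supported functions d : {1,…,m} → ℕ. For each n ∈ ℕ the family (a_d · ∏_{j=1}^m (u_j^n − 1)^{d(j)})_d is summable in ℤ_p, and its sum defines a function g : ℕ → ℤ_p, g(n) = ∑_d a_d ∏_{j=1}^m (u_j^n − 1)^{d(j)}. Then for all integers i, n ≥ 0, the i-th iterated forward difference satisfies (Δ^i g)(n) ∈ p^i ℤ_p. -/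
open Finset Filter

section Aux

variable {p : ℕ} [Fact p.Prime]

private lemma geom_fwdDiff (w : ℤ_[p]) (i : ℕ) (c : ℤ_[p]) (n : ℕ) :
    (fwdDiff (1 : ℕ))^[i] (fun n : ℕ => c * w ^ n) n = c * (w - 1) ^ i * w ^ n := by
  induction i generalizing c with
  | zero => simp
  | succ i ih =>
      rw [Function.iterate_succ_apply]
      have h : fwdDiff (1 : ℕ) (fun n : ℕ => c * w ^ n)
          = fun n : ℕ => (c * (w - 1)) * w ^ n := by
        funext k
        simp only [fwdDiff, pow_succ]
        ring
      rw [h, ih]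
      ring

private lemma geom_fwdDiff' (w : ℤ_[p]) (i n : ℕ) :
    (fwdDiff (1 : ℕ))^[i] (fun n : ℕ => w ^ n) n = (w - 1) ^ i * w ^ n := by
  simpa only [one_mul] using geom_fwdDiff w i 1 n

/-- The set of geometric functions `n ↦ w ^ n` with `w ≡ 1 mod p`. -/
private def geomSet (p : ℕ) [Fact p.Prime] : Set (ℕ → ℤ_[p]) :=
  {g | ∃ w : ℤ_[p], w - 1 ∈ Ideal.span {(p : ℤ_[p])} ∧ g = fun n => w ^ n}

private lemma geomSpan_one_mem : (1 : ℕ → ℤ_[p]) ∈ Submodule.span ℤ_[p] (geomSet p) :=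
  Submodule.subset_span ⟨1, by simp, by funext n; simp⟩

private lemma geomSpan_mul_mem {x y : ℕ → ℤ_[p]}
    (hx : x ∈ Submodule.span ℤ_[p] (geomSet p)) (hy : y ∈ Submodule.span ℤ_[p] (geomSet p)) :
    x * y ∈ Submodule.span ℤ_[p] (geomSet p) := by
  have h := Submodule.mul_mem_mul hx hy
  rw [Submodule.span_mul_span] at h
  refine Submodule.span_mono ?_ h
  rintro z ⟨g1, hg1, g2, hg2, rfl⟩
  obtain ⟨w1, hw1, rfl⟩ := hg1
  obtain ⟨w2, hw2, rfl⟩ := hg2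
  refine ⟨w1 * w2, ?_, ?_⟩
  · have : w1 * w2 - 1 = (w1 - 1) * w2 + (w2 - 1) := by ring
    rw [this]
    exact add_mem (Ideal.mul_mem_right _ _ hw1) hw2
  · funext n
    simp [mul_pow]

private lemma geomSpan_pow_mem {x : ℕ → ℤ_[p]}
    (hx : x ∈ Submodule.span ℤ_[p] (geomSet p)) (k : ℕ) :
    x ^ k ∈ Submodule.span ℤ_[p] (geomSet p) := by
  induction k with
  | zero => simpa using geomSpan_one_mem
  | succ k ih => rw [pow_succ]; exact geomSpan_mul_mem ih hx

private lemma geomSpan_fwdDiff_mem {g : ℕ → ℤ_[p]}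
    (hg : g ∈ Submodule.span ℤ_[p] (geomSet p)) :
    ∀ i n : ℕ, (fwdDiff 1)^[i] g n ∈ Ideal.span {(p : ℤ_[p])} ^ i := by
  induction hg using Submodule.span_induction with
  | mem x hx =>
      obtain ⟨w, hw, rfl⟩ := hx
      intro i n
      rw [geom_fwdDiff']
      exact Ideal.mul_mem_right _ _ (Ideal.pow_mem_pow hw i)
  | zero =>
      intro i n
      have h0 : ((fwdDiff (1 : ℕ))^[i] (0 : ℕ → ℤ_[p])) n = 0 := by
        rw [← zero_smul ℤ_[p] (0 : ℕ → ℤ_[p]), fwdDiff_iter_const_smul]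
        simp
      rw [h0]
      exact zero_mem _
  | add x y hx hy ihx ihy =>
      intro i n
      rw [fwdDiff_iter_add]
      exact add_mem (ihx i n) (ihy i n)
  | smul a x hx ihx =>
      intro i n
      rw [fwdDiff_iter_const_smul]
      exact Submodule.smul_mem _ _ (ihx i n)

private lemma prodFn_mem_geomSpan {m : ℕ} (u : Fin m → ℤ_[p])
    (hu : ∀ j, u j - 1 ∈ Ideal.span {(p : ℤ_[p])}) (d : Fin m →₀ ℕ) :
    (fun n : ℕ => ∏ j : Fin m, (u j ^ n - 1) ^ d j) ∈ Submodule.span ℤ_[p] (geomSet p) := by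
  have hfun : (fun n : ℕ => ∏ j : Fin m, (u j ^ n - 1) ^ d j)
      = ∏ j : Fin m, (fun n : ℕ => (u j ^ n - 1) ^ d j) := by
    funext n
    simp [Finset.prod_apply]
  rw [hfun]
  refine Finset.prod_induction _ (· ∈ Submodule.span ℤ_[p] (geomSet p))
    (fun a b ha hb => geomSpan_mul_mem ha hb) geomSpan_one_mem ?_
  intro j _
  have hpow : (fun n : ℕ => (u j ^ n - 1) ^ d j) = (fun n : ℕ => u j ^ n - 1) ^ (d j) := by
    funext n
    simp [Pi.pow_apply]
  rw [hpow]
  refine geomSpan_pow_mem ?_ (d j)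
  have h1 : (fun n : ℕ => u j ^ n) ∈ Submodule.span ℤ_[p] (geomSet p) :=
    Submodule.subset_span ⟨u j, hu j, rfl⟩
  have h2 : (fun n : ℕ => (1 : ℤ_[p]) ^ n) ∈ Submodule.span ℤ_[p] (geomSet p) :=
    Submodule.subset_span ⟨1, by simp, rfl⟩
  have h := sub_mem h1 h2
  have heq : (fun n : ℕ => u j ^ n) - (fun n : ℕ => (1 : ℤ_[p]) ^ n)
      = fun n : ℕ => u j ^ n - 1 := by
    funext n
    simp [Pi.sub_apply]
  rwa [heq] at h

private lemma mem_span_p_pow_n {w : ℤ_[p]} (hw : w - 1 ∈ Ideal.span {(p : ℤ_[p])}) (n : ℕ) :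
    w ^ n - 1 ∈ Ideal.span {(p : ℤ_[p])} := by
  rw [Ideal.mem_span_singleton] at hw ⊢
  have := (sub_dvd_pow_sub_pow w 1 n)
  simpa using hw.trans this

private lemma norm_le_inv_p_of_mem {x : ℤ_[p]} (hx : x ∈ Ideal.span {(p : ℤ_[p])}) :
    ‖x‖ ≤ (p : ℝ)⁻¹ := by
  have := (PadicInt.norm_le_pow_iff_mem_span_pow x 1).mpr (by rwa [pow_one])
  simpa using this

private lemma term_norm_le {m : ℕ} (u : Fin m → ℤ_[p])
    (hu : ∀ j, u j - 1 ∈ Ideal.span {(p : ℤ_[p])}) (a : (Fin m →₀ ℕ) → ℤ_[p])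
    (n : ℕ) (d : Fin m →₀ ℕ) :
    ‖a d * ∏ j : Fin m, (u j ^ n - 1) ^ d j‖ ≤ (p : ℝ)⁻¹ ^ (∑ j : Fin m, d j) := by
  have hinv : (0 : ℝ) ≤ (p : ℝ)⁻¹ := by positivity
  calc ‖a d * ∏ j : Fin m, (u j ^ n - 1) ^ d j‖
      = ‖a d‖ * ‖∏ j : Fin m, (u j ^ n - 1) ^ d j‖ := norm_mul _ _
    _ ≤ 1 * ‖∏ j : Fin m, (u j ^ n - 1) ^ d j‖ :=
        mul_le_mul_of_nonneg_right (PadicInt.norm_le_one _) (norm_nonneg _)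
    _ = ‖∏ j : Fin m, (u j ^ n - 1) ^ d j‖ := one_mul _
    _ ≤ ∏ j : Fin m, ‖(u j ^ n - 1) ^ d j‖ := norm_prod_le _ _
    _ ≤ ∏ j : Fin m, (p : ℝ)⁻¹ ^ d j := by
        refine Finset.prod_le_prod (fun j _ => norm_nonneg _) (fun j _ => ?_)
        rw [norm_pow]
        exact pow_le_pow_left₀ (norm_nonneg _)
          (norm_le_inv_p_of_mem (mem_span_p_pow_n (hu j) n)) _
    _ = (p : ℝ)⁻¹ ^ (∑ j : Fin m, d j) := Finset.prod_pow_eq_pow_sum _ _ _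

private lemma summable_term {m : ℕ} (u : Fin m → ℤ_[p])
    (hu : ∀ j, u j - 1 ∈ Ideal.span {(p : ℤ_[p])}) (a : (Fin m →₀ ℕ) → ℤ_[p]) (n : ℕ) :
    Summable (fun d : Fin m →₀ ℕ => a d * ∏ j : Fin m, (u j ^ n - 1) ^ d j) := by
  apply NonarchimedeanAddGroup.summable_of_tendsto_cofinite_zero
  rw [NormedAddCommGroup.tendsto_nhds_zero]
  intro ε hε
  rw [Filter.eventually_cofinite]
  have hp1 : (p : ℝ)⁻¹ < 1 := by
    rw [inv_lt_one_iff₀]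
    right
    exact_mod_cast (Fact.out : p.Prime).one_lt
  obtain ⟨N, hN⟩ := exists_pow_lt_of_lt_one hε hp1
  have hsub : {d : Fin m →₀ ℕ | ¬ ‖a d * ∏ j : Fin m, (u j ^ n - 1) ^ d j‖ < ε}
      ⊆ (fun d : Fin m →₀ ℕ => (d : Fin m → ℕ)) ⁻¹' (Set.pi Set.univ fun _ => Set.Iio N) := by
    intro d hd
    have hsum : ∑ j : Fin m, d j < N := by
      by_contra hge
      push_neg at hge
      apply hd
      calc ‖a d * ∏ j : Fin m, (u j ^ n - 1) ^ d j‖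
          ≤ (p : ℝ)⁻¹ ^ (∑ j : Fin m, d j) := term_norm_le u hu a n d
        _ ≤ (p : ℝ)⁻¹ ^ N := pow_le_pow_of_le_one (by positivity) hp1.le hge
        _ < ε := hN
    intro j _
    exact lt_of_le_of_lt (Finset.single_le_sum (fun j _ => Nat.zero_le _) (Finset.mem_univ j)) hsum
  refine Set.Finite.subset ?_ hsub
  exact Set.Finite.preimage (Function.Injective.injOn (DFunLike.coe_injective (F := Fin m →₀ ℕ)))
    (Set.Finite.pi fun _ => Set.finite_Iio N)

private lemma tsum_mem_span_pow {ι : Type*} (i : ℕ) (f : ι → ℤ_[p]) (hf : Summable f)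
    (h : ∀ x, f x ∈ Ideal.span {(p : ℤ_[p])} ^ i) :
    ∑' x, f x ∈ Ideal.span {(p : ℤ_[p])} ^ i := by
  have hmem : ∀ x, f x ∈ Ideal.span {(p : ℤ_[p]) ^ i} := fun x => by
    rw [← Ideal.span_singleton_pow]; exact h x
  rw [Ideal.span_singleton_pow, ← PadicInt.norm_le_pow_iff_mem_span_pow]
  have hC : IsClosed {x : ℤ_[p] | ‖x‖ ≤ (p : ℝ) ^ (-(i : ℤ))} :=
    isClosed_le continuous_norm continuous_const
  have ht : Filter.Tendsto (fun s : Finset ι => ∑ x ∈ s, f x) Filter.atTop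
      (nhds (∑' x, f x)) := hf.hasSum
  refine hC.mem_of_tendsto ht (Filter.Eventually.of_forall fun s => ?_)
  show ‖∑ x ∈ s, f x‖ ≤ (p : ℝ) ^ (-(i : ℤ))
  rw [PadicInt.norm_le_pow_iff_mem_span_pow]
  exact Submodule.sum_mem _ fun x _ => hmem x

end Aux

/-- **Iterated differences of generalized (multi-variable) Iwasawa functions.**
Let `p` be a prime, `m ≥ 1`, and `u_1, …, u_m ∈ ℤ_p` with `u_j − 1 ∈ pℤ_p`.  Let
`H = ∑_d a_d X^d` be a formal power series in `m` variables over `ℤ_p`, `d` ranging over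
finitely supported functions `{1,…,m} → ℕ`.  For each `n` the family
`(a_d ∏_j (u_j^n − 1)^{d j})_d` is summable in `ℤ_p`, and its sum defines a function
`g : ℕ → ℤ_p`.  Then for all `i, n ≥ 0`, `(Δ^i g)(n) ∈ p^i ℤ_p`. -/
theorem fwdDiff_iterate_generalizedIwasawaFn_mem_pow
    (p : ℕ) [Fact p.Prime] (m : ℕ) (hm : 1 ≤ m)
    (u : Fin m → ℤ_[p]) (hu : ∀ j, u j - 1 ∈ Ideal.span {(p : ℤ_[p])})
    (H : MvPowerSeries (Fin m) ℤ_[p])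
    (a : (Fin m →₀ ℕ) → ℤ_[p]) (ha : ∀ d, a d = MvPowerSeries.coeff d H) :
    (∀ n : ℕ,
        Summable (fun d : Fin m →₀ ℕ => a d * ∏ j : Fin m, (u j ^ n - 1) ^ d j))
      ∧ (∀ i n : ℕ,
          (fwdDiff 1)^[i]
              (fun n : ℕ => ∑' d : Fin m →₀ ℕ, a d * ∏ j : Fin m, (u j ^ n - 1) ^ d j) n
            ∈ Ideal.span {(p : ℤ_[p])} ^ i) := by
  have hsum : ∀ n : ℕ,
      Summable (fun d : Fin m →₀ ℕ => a d * ∏ j : Fin m, (u j ^ n - 1) ^ d j) :=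
    fun n => summable_term u hu a n
  refine ⟨hsum, fun i n => ?_⟩
  set f : (Fin m →₀ ℕ) → ℕ → ℤ_[p] :=
    fun d k => a d * ∏ j : Fin m, (u j ^ k - 1) ^ d j with hfdef
  have hfmem : ∀ d, f d ∈ Submodule.span ℤ_[p] (geomSet p) := by
    intro d
    have : f d = a d • (fun k : ℕ => ∏ j : Fin m, (u j ^ k - 1) ^ d j) := by
      funext k
      simp [hfdef, Pi.smul_apply, smul_eq_mul]
    rw [this]
    exact Submodule.smul_mem _ _ (prodFn_mem_geomSpan u hu d)
  have hterm : ∀ d, (fwdDiff 1)^[i] (f d) n ∈ Ideal.span {(p : ℤ_[p])} ^ i :=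
    fun d => geomSpan_fwdDiff_mem (hfmem d) i n
  have hsummable_shift : ∀ k : ℕ, Summable (fun d : Fin m →₀ ℕ => f d k) := fun k => hsum k
  have hswap : (fwdDiff 1)^[i]
      (fun k : ℕ => ∑' d : Fin m →₀ ℕ, a d * ∏ j : Fin m, (u j ^ k - 1) ^ d j) n
      = ∑' d : Fin m →₀ ℕ, (fwdDiff 1)^[i] (f d) n := by
    rw [fwdDiff_iter_eq_sum_shift]
    have step1 : ∀ k ∈ Finset.range (i + 1),
        ((-1 : ℤ) ^ (i - k) * (i.choose k : ℤ)) •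
            (fun k' : ℕ => ∑' d : Fin m →₀ ℕ, a d * ∏ j : Fin m, (u j ^ k' - 1) ^ d j)
              (n + k • 1)
          = ∑' d : Fin m →₀ ℕ,
              ((-1 : ℤ) ^ (i - k) * (i.choose k : ℤ)) • f d (n + k • 1) := by
      intro k _
      exact (Summable.tsum_const_smul _ (hsummable_shift (n + k • 1))).symm
    rw [Finset.sum_congr rfl step1]
    rw [← Summable.tsum_finsetSum (fun k _ => Summable.const_smul _ (hsummable_shift (n + k • 1)))]
    congr 1
    funext d
    rw [fwdDiff_iter_eq_sum_shift]
  rw [hswap]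
  refine tsum_mem_span_pow i _ ?_ hterm
  have : (fun d : Fin m →₀ ℕ => (fwdDiff 1)^[i] (f d) n)
      = fun d : Fin m →₀ ℕ => ∑ k ∈ Finset.range (i + 1),
          ((-1 : ℤ) ^ (i - k) * (i.choose k : ℤ)) • f d (n + k • 1) := by
    funext d
    rw [fwdDiff_iter_eq_sum_shift]
  rw [this]
  exact summable_sum fun k _ => Summable.const_smul _ (hsummable_shift (n + k • 1))
end
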